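/- Let m be a nonnegative integer, a > 0 a real number, and f : [0,∞) → ℝ a continuous function with f(k) ≥ 0 for all k. Then, as T → ∞, ∫₀^∞ k^m e^{−T(ak + k²·f(k))} dk = m!·(aT)^{−(m+1)} + O(T^{−(m+2)}). -/

import Mathlib

open Filter MeasureTheory Set Real


lemma key_integrable (n : ℕ) {r : ℝ} (hr : 0 < r) :
    IntegrableOn (fun k : ℝ => k ^ n * Real.exp (-(r * k))) (Set.Ioi 0) := by
  have h := integrableOn_rpow_mul_exp_neg_mul_rpow (s := (n : ℝ)) (p := 1)
    (lt_of_lt_of_le neg_one_lt_zero (Nat.cast_nonneg n)) one_pos hr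
  simpa [Real.rpow_natCast, neg_mul] using h

lemma key_int (n : ℕ) {r : ℝ} (hr : 0 < r) :
    ∫ k in Set.Ioi (0:ℝ), k ^ n * Real.exp (-(r * k))
      = (Nat.factorial n : ℝ) / r ^ (n + 1) := by
  have h := Real.integral_rpow_mul_exp_neg_mul_Ioi
    (a := (n : ℝ) + 1) (by positivity) hr
  rw [show ((n : ℝ) + 1) - 1 = (n : ℝ) by ring] at h
  rw [show ((n : ℝ) + 1) = ((n + 1 : ℕ) : ℝ) by push_cast; ring] at h
  simp_rw [Real.rpow_natCast] at h
  rw [show ((n + 1 : ℕ) : ℝ) = (n : ℝ) + 1 by push_cast; ring,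
    Real.Gamma_nat_eq_factorial] at h
  rw [h]
  field_simp
  rw [div_pow, one_pow, div_mul_cancel₀ _ (pow_ne_zero _ hr.ne')]

/-- Large-time asymptotics of the Laplace-type integral `∫₀^∞ k^m e^{−T(ak + k²f(k))} dk`:
it equals `m!·(aT)^{−(m+1)}` up to an error `O(T^{−(m+2)})` as `T → ∞`. -/
theorem laplace_integral_linear_decay (m : ℕ) (a : ℝ) (ha : 0 < a)
    (f : ℝ → ℝ) (hf : ContinuousOn f (Set.Ici 0)) (hf0 : ∀ k : ℝ, 0 ≤ k → 0 ≤ f k) :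
    (fun T : ℝ =>
        (∫ k in Set.Ioi (0 : ℝ), k ^ m * Real.exp (-(T * (a * k + k ^ 2 * f k))))
          - (Nat.factorial m : ℝ) / (a * T) ^ (m + 1))
      =O[atTop] fun T : ℝ => 1 / T ^ (m + 2) := by
  obtain ⟨M, hM⟩ : ∃ M : ℝ, ∀ k ∈ Set.Icc (0:ℝ) 1, f k ≤ M := by
    obtain ⟨C, hC⟩ := isCompact_Icc.exists_bound_of_continuousOn
      (hf.mono Set.Icc_subset_Ici_self)
    exact ⟨C, fun k hk => (le_abs_self _).trans (hC k hk)⟩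
  have hM0 : 0 ≤ M := (hf0 0 le_rfl).trans (hM 0 ⟨le_rfl, zero_le_one⟩)
  rw [Asymptotics.isBigO_iff]
  refine ⟨M * (Nat.factorial (m+2)) / a ^ (m+3)
      + 2 ^ (m+2) * (Nat.factorial m) / a ^ (m+2), ?_⟩
  filter_upwards [eventually_ge_atTop (1:ℝ)] with T hT
  have hT0 : 0 < T := lt_of_lt_of_le one_pos hT
  have haT : 0 < a * T := by positivity
  have haT2 : 0 < a * T / 2 := by positivity
  set g : ℝ → ℝ := fun k => k ^ m * Real.exp (-(T * (a * k + k ^ 2 * f k))) with hg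
  set h : ℝ → ℝ := fun k => k ^ m * Real.exp (-(a * T * k)) with hh
  -- continuity of g on Ici 0
  have hgc : ContinuousOn g (Set.Ici 0) := by
    apply ContinuousOn.mul (continuous_pow m).continuousOn
    apply Real.continuous_exp.comp_continuousOn
    apply ContinuousOn.neg
    exact continuousOn_const.mul ((continuousOn_const.mul continuousOn_id).add
      ((continuous_pow 2).continuousOn.mul hf))
  have hgm : AEStronglyMeasurable g (volume.restrict (Set.Ioi 0)) :=
    (hgc.mono Set.Ioi_subset_Ici_self).aestronglyMeasurable measurableSet_Ioi
  have hgh : ∀ k ∈ Set.Ioi (0:ℝ), 0 ≤ g k ∧ g k ≤ h k := by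
    intro k hk
    have hk0 : (0:ℝ) < k := hk
    have hfk : 0 ≤ f k := hf0 k hk0.le
    constructor
    · positivity
    · apply mul_le_mul_of_nonneg_left _ (by positivity : (0:ℝ) ≤ k ^ m)
      apply Real.exp_le_exp.mpr
      nlinarith [mul_nonneg (mul_nonneg hT0.le (sq_nonneg k)) hfk]
  have hInt_h : IntegrableOn h (Set.Ioi 0) := key_integrable m haT
  have hInt_g : IntegrableOn g (Set.Ioi 0) := by
    refine hInt_h.mono' hgm ?_
    filter_upwards [ae_restrict_mem measurableSet_Ioi] with k hk
    rw [Real.norm_eq_abs, abs_of_nonneg (hgh k hk).1]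
    exact (hgh k hk).2
  have hval : ∫ k in Set.Ioi (0:ℝ), h k = (Nat.factorial m : ℝ) / (a*T) ^ (m+1) :=
    key_int m haT
  have hInt_d : IntegrableOn (fun k => g k - h k) (Set.Ioi 0) := hInt_g.sub hInt_h
  have hsplit : Set.Ioi (0:ℝ) = Set.Ioc 0 1 ∪ Set.Ioi 1 :=
    (Set.Ioc_union_Ioi_eq_Ioi zero_le_one).symm
  have hsub1 : Set.Ioc (0:ℝ) 1 ⊆ Set.Ioi 0 := Set.Ioc_subset_Ioi_self
  have hsub2 : Set.Ioi (1:ℝ) ⊆ Set.Ioi 0 := Set.Ioi_subset_Ioi zero_le_one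
  have hrw : (∫ k in Set.Ioi (0:ℝ), g k) - (Nat.factorial m : ℝ) / (a*T) ^ (m+1)
      = (∫ k in Set.Ioc (0:ℝ) 1, (g k - h k)) + ∫ k in Set.Ioi (1:ℝ), (g k - h k) := by
    rw [← hval, ← integral_sub hInt_g hInt_h, hsplit,
      setIntegral_union (Set.Ioc_disjoint_Ioi le_rfl) measurableSet_Ioi
        (hInt_d.mono_set hsub1) (hInt_d.mono_set hsub2)]
  -- bound on Ioc 0 1
  have hB1int : IntegrableOn (fun k => (T*M) * (k^(m+2) * Real.exp (-(a*T*k))))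
      (Set.Ioi 0) := (key_integrable (m+2) haT).const_mul _
  have bound1 : ‖∫ k in Set.Ioc (0:ℝ) 1, (g k - h k)‖
      ≤ T*M*((Nat.factorial (m+2) : ℝ) / (a*T)^(m+3)) := by
    calc ‖∫ k in Set.Ioc (0:ℝ) 1, (g k - h k)‖
        ≤ ∫ k in Set.Ioc (0:ℝ) 1, ‖g k - h k‖ := norm_integral_le_integral_norm _
      _ ≤ ∫ k in Set.Ioc (0:ℝ) 1, (T*M) * (k^(m+2) * Real.exp (-(a*T*k))) := by
          refine setIntegral_mono_on ((hInt_d.mono_set hsub1).norm)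
            (hB1int.mono_set hsub1) measurableSet_Ioc ?_
          intro k hk
          have hk0 : (0:ℝ) < k := hk.1
          have hfk : 0 ≤ f k := hf0 k hk0.le
          have hfM : f k ≤ M := hM k ⟨hk0.le, hk.2⟩
          have hE : (0:ℝ) < Real.exp (-(a*T*k)) := Real.exp_pos _
          have hexpand : g k = h k * Real.exp (-(T*(k^2*f k))) := by
            simp only [hg, hh]
            rw [show -(T*(a*k + k^2*f k)) = -(a*T*k) + -(T*(k^2*f k)) by ring,
              Real.exp_add, ← mul_assoc]
          have hx0 : 0 ≤ T*(k^2*f k) := by positivity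
          have hle1 : Real.exp (-(T*(k^2*f k))) ≤ 1 := Real.exp_le_one_iff.mpr (by linarith)
          have hge : 1 - T*(k^2*f k) ≤ Real.exp (-(T*(k^2*f k))) := by
            have := Real.add_one_le_exp (-(T*(k^2*f k)))
            linarith
          have hh0 : 0 ≤ h k := by simp only [hh]; positivity
          rw [Real.norm_eq_abs, hexpand, abs_of_nonpos (by nlinarith)]
          have step1 : -(h k * Real.exp (-(T*(k^2*f k))) - h k) ≤ h k * (T*(k^2*f k)) := by
            nlinarith
          refine step1.trans ?_
          have : h k * (T*(k^2*f k)) = T * (k^(m+2) * Real.exp (-(a*T*k))) * f k := by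
            simp only [hh]; ring
          rw [this]
          calc T * (k^(m+2) * Real.exp (-(a*T*k))) * f k
              ≤ T * (k^(m+2) * Real.exp (-(a*T*k))) * M := by gcongr <;> positivity
            _ = T*M*(k^(m+2) * Real.exp (-(a*T*k))) := by ring
      _ ≤ ∫ k in Set.Ioi (0:ℝ), (T*M) * (k^(m+2) * Real.exp (-(a*T*k))) := by
          refine setIntegral_mono_set hB1int
            (by filter_upwards [ae_restrict_mem measurableSet_Ioi] with k hk
                have hk0 : (0:ℝ) < k := hk
                exact mul_nonneg (mul_nonneg hT0.le hM0) (by positivity))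
            (HasSubset.Subset.eventuallyLE hsub1)
      _ = T*M*((Nat.factorial (m+2) : ℝ) / (a*T)^(m+3)) := by
          rw [integral_const_mul, key_int (m+2) haT]
  -- bound on Ioi 1
  have hB2int : IntegrableOn
      (fun k => Real.exp (-(a*T/2)) * (k^m * Real.exp (-(a*T/2*k)))) (Set.Ioi 0) :=
    (key_integrable m haT2).const_mul _
  have bound2 : ‖∫ k in Set.Ioi (1:ℝ), (g k - h k)‖
      ≤ Real.exp (-(a*T/2)) * ((Nat.factorial m : ℝ) / (a*T/2)^(m+1)) := by
    calc ‖∫ k in Set.Ioi (1:ℝ), (g k - h k)‖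
        ≤ ∫ k in Set.Ioi (1:ℝ), ‖g k - h k‖ := norm_integral_le_integral_norm _
      _ ≤ ∫ k in Set.Ioi (1:ℝ), Real.exp (-(a*T/2)) * (k^m * Real.exp (-(a*T/2*k))) := by
          refine setIntegral_mono_on ((hInt_d.mono_set hsub2).norm)
            (hB2int.mono_set hsub2) measurableSet_Ioi ?_
          intro k hk
          have hk1 : (1:ℝ) ≤ k := le_of_lt hk
          have hk0 : (0:ℝ) < k := lt_of_lt_of_le one_pos hk1
          obtain ⟨hg0, hgle⟩ := hgh k (hsub2 hk)
          have hh0 : 0 ≤ h k := le_trans hg0 hgle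
          have habs : ‖g k - h k‖ ≤ h k := by
            rw [Real.norm_eq_abs, abs_of_nonpos (by linarith)]; linarith
          refine habs.trans ?_
          have hexp : Real.exp (-(a*T*k)) ≤ Real.exp (-(a*T/2)) * Real.exp (-(a*T/2*k)) := by
            rw [← Real.exp_add]
            apply Real.exp_le_exp.mpr
            nlinarith
          calc h k = k^m * Real.exp (-(a*T*k)) := rfl
            _ ≤ k^m * (Real.exp (-(a*T/2)) * Real.exp (-(a*T/2*k))) := by
                apply mul_le_mul_of_nonneg_left hexp (by positivity)
            _ = Real.exp (-(a*T/2)) * (k^m * Real.exp (-(a*T/2*k))) := by ring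
      _ ≤ ∫ k in Set.Ioi (0:ℝ), Real.exp (-(a*T/2)) * (k^m * Real.exp (-(a*T/2*k))) := by
          refine setIntegral_mono_set hB2int
            (by filter_upwards [ae_restrict_mem measurableSet_Ioi] with k hk
                have hk0 : (0:ℝ) < k := hk
                exact mul_nonneg (Real.exp_pos _).le (by positivity))
            (HasSubset.Subset.eventuallyLE hsub2)
      _ = Real.exp (-(a*T/2)) * ((Nat.factorial m : ℝ) / (a*T/2)^(m+1)) := by
          rw [integral_const_mul, key_int m haT2]
  -- put things together
  have hrhsn : ‖(1:ℝ) / T^(m+2)‖ = 1/T^(m+2) := by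
    rw [Real.norm_eq_abs, abs_of_pos (by positivity)]
  rw [hrw, hrhsn]
  have hterm1 : T*M*((Nat.factorial (m+2) : ℝ) / (a*T)^(m+3))
      = (M * (Nat.factorial (m+2)) / a^(m+3)) * (1/T^(m+2)) := by
    rw [mul_pow]
    field_simp
    ring
  have hexpb : Real.exp (-(a*T/2)) ≤ 2/(a*T) := by
    rw [Real.exp_neg]
    have h1 : a*T/2 ≤ Real.exp (a*T/2) := by
      have := Real.add_one_le_exp (a*T/2); linarith
    calc (Real.exp (a*T/2))⁻¹ ≤ (a*T/2)⁻¹ := inv_anti₀ haT2 h1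
      _ = 2/(a*T) := by field_simp
  have hterm2 : Real.exp (-(a*T/2)) * ((Nat.factorial m : ℝ) / (a*T/2)^(m+1))
      ≤ (2^(m+2) * (Nat.factorial m) / a^(m+2)) * (1/T^(m+2)) := by
    have hstep : Real.exp (-(a*T/2)) * ((Nat.factorial m : ℝ) / (a*T/2)^(m+1))
        ≤ (2/(a*T)) * ((Nat.factorial m : ℝ) / (a*T/2)^(m+1)) :=
      mul_le_mul_of_nonneg_right hexpb (by positivity)
    refine hstep.trans (le_of_eq ?_)
    rw [div_pow, mul_pow]
    field_simp
    ring
  calc ‖(∫ k in Set.Ioc (0:ℝ) 1, (g k - h k)) + ∫ k in Set.Ioi (1:ℝ), (g k - h k)‖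
      ≤ ‖∫ k in Set.Ioc (0:ℝ) 1, (g k - h k)‖ + ‖∫ k in Set.Ioi (1:ℝ), (g k - h k)‖ :=
        norm_add_le _ _
    _ ≤ T*M*((Nat.factorial (m+2) : ℝ) / (a*T)^(m+3))
        + Real.exp (-(a*T/2)) * ((Nat.factorial m : ℝ) / (a*T/2)^(m+1)) :=
        add_le_add bound1 bound2
    _ ≤ (M * (Nat.factorial (m+2)) / a^(m+3)) * (1/T^(m+2))
        + (2^(m+2) * (Nat.factorial m) / a^(m+2)) * (1/T^(m+2)) :=
        add_le_add (le_of_eq hterm1) hterm2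
    _ = (M * (Nat.factorial (m+2)) / a^(m+3)
        + 2^(m+2) * (Nat.factorial m) / a^(m+2)) * (1/T^(m+2)) := by ring
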